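/- arXiv:math/0406227 — 3 statements merged into one kernel-verified Lean document; each statement's English description precedes it below -/
import Mathlib

section
/- Let G be a torsion-free nilpotent group containing an abelian subgroup of finite index. Then G is abelian. -/
open scoped commutatorElement

/-- If `⁅a,b⁆` is central, then `⁅a^n, b⁆ = ⁅a,b⁆^n`. -/
private lemma aux_pow_commutator {G : Type*} [Group G] (a b : G)
    (h : ∀ g : G, Commute ⁅a, b⁆ g) (n : ℕ) :
    a ^ n * b = ⁅a, b⁆ ^ n * (b * a ^ n) := by
  induction n with
  | zero => simp
  | succ n ih =>
    have hc : ⁅a, b⁆ * (b * a) = a * b := by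
      rw [commutatorElement_def]; group
    calc a ^ (n + 1) * b = a * (a ^ n * b) := by rw [pow_succ']; group
      _ = a * (⁅a, b⁆ ^ n * (b * a ^ n)) := by rw [ih]
      _ = ⁅a, b⁆ ^ n * (a * b * a ^ n) := by
          rw [← mul_assoc, ← mul_assoc, ← ((h a).pow_left n).eq]; group
      _ = ⁅a, b⁆ ^ n * (⁅a, b⁆ * (b * a) * a ^ n) := by rw [hc]
      _ = ⁅a, b⁆ ^ (n + 1) * (b * a ^ (n + 1)) := by rw [pow_succ, pow_succ']; group

/-- If `⁅a,b⁆` is central modulo the normal subgroup `N` and `⁅a^n, b⁆ ∈ N`,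
then `⁅a,b⁆ ^ n ∈ N`. -/
private lemma aux_comm_pow_mem {G : Type*} [Group G] {N : Subgroup G} [N.Normal]
    {a b : G} {n : ℕ} (hc : ∀ y : G, ⁅⁅a, b⁆, y⁆ ∈ N) (hab : ⁅a ^ n, b⁆ ∈ N) :
    ⁅a, b⁆ ^ n ∈ N := by
  set f := QuotientGroup.mk' N with hf
  have hcen : ∀ g : G ⧸ N, Commute ⁅f a, f b⁆ g := by
    intro g
    obtain ⟨y, rfl⟩ := QuotientGroup.mk'_surjective N g
    rw [← commutatorElement_eq_one_iff_commute, ← map_commutatorElement,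
      ← map_commutatorElement]
    exact (QuotientGroup.eq_one_iff _).2 (hc y)
  have h1 : f (a ^ n) * f b = f b * f (a ^ n) := by
    have : f ⁅a ^ n, b⁆ = 1 := (QuotientGroup.eq_one_iff _).2 hab
    rw [map_commutatorElement] at this
    exact commutatorElement_eq_one_iff_commute.1 this
  have h2 := aux_pow_commutator (f a) (f b) hcen n
  rw [map_pow] at h1
  rw [h1] at h2
  have h3 : (⁅f a, f b⁆) ^ n = 1 := by
    have h2' : ⁅f a, f b⁆ ^ n * (f b * f a ^ n) = 1 * (f b * f a ^ n) := by
      rw [one_mul]; exact h2.symm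
    exact mul_right_cancel h2'
  rw [← map_commutatorElement, ← map_pow] at h3
  exact (QuotientGroup.eq_one_iff _).1 h3

/-- torsion-free: pow eq one implies one -/
private lemma aux_tf_pow {G : Type*} [Group G] (htf : ∀ g : G, g ≠ 1 → ¬IsOfFinOrder g)
    {x : G} {n : ℕ} (hn : n ≠ 0) (h : x ^ n = 1) : x = 1 := by
  by_contra hx
  exact htf x hx (isOfFinOrder_iff_pow_eq_one.2 ⟨n, Nat.pos_of_ne_zero hn, h⟩)

/-- One-step isolation of the upper central series in a torsion-free group. -/
private lemma aux_isol_step {G : Type*} [Group G] (htf : ∀ g : G, g ≠ 1 → ¬IsOfFinOrder g) :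
    ∀ (i : ℕ) {x : G} {n : ℕ}, n ≠ 0 → x ∈ Subgroup.upperCentralSeries G (i + 1) →
      x ^ n ∈ Subgroup.upperCentralSeries G i → x ∈ Subgroup.upperCentralSeries G i := by
  intro i
  induction i with
  | zero =>
    intro x n hn _ hxn
    rw [upperCentralSeries_zero, Subgroup.mem_bot] at hxn ⊢
    exact aux_tf_pow htf hn hxn
  | succ i ih =>
    intro x n hn hx hxn
    rw [mem_upperCentralSeries_succ_iff] at hx hxn ⊢
    intro y
    have hcy : ∀ z : G, ⁅⁅x, y⁆, z⁆ ∈ Subgroup.upperCentralSeries G i := by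
      intro z
      have := hx y
      change ⁅x, y⁆ ∈ _ at this
      rw [mem_upperCentralSeries_succ_iff] at this
      exact this z
    have hpow : ⁅x, y⁆ ^ n ∈ Subgroup.upperCentralSeries G i :=
      aux_comm_pow_mem hcy (hxn y)
    have hmem : ⁅x, y⁆ ∈ Subgroup.upperCentralSeries G (i + 1) := by
      rw [mem_upperCentralSeries_succ_iff]; exact hcy
    exact ih hn hmem hpow

/-- Isolation of the upper central series. -/
private lemma aux_isol {G : Type*} [Group G] (htf : ∀ g : G, g ≠ 1 → ¬IsOfFinOrder g) :
    ∀ (j i : ℕ) {x : G} {n : ℕ}, n ≠ 0 → x ∈ Subgroup.upperCentralSeries G j →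
      x ^ n ∈ Subgroup.upperCentralSeries G i → x ∈ Subgroup.upperCentralSeries G i := by
  intro j
  induction j with
  | zero =>
    intro i x n _ hx _
    rw [upperCentralSeries_zero, Subgroup.mem_bot] at hx
    rw [hx]; exact Subgroup.one_mem _
  | succ j ih =>
    intro i x n hn hx hxn
    rcases le_or_gt (j + 1) i with h | h
    · exact upperCentralSeries_mono G h hx
    · have hij : i ≤ j := Nat.lt_succ_iff.1 h
      have hx' : x ∈ Subgroup.upperCentralSeries G j :=
        aux_isol_step htf j hn hx
          (upperCentralSeries_mono G hij hxn)
      exact ih i hn hx' hxn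

/-- Isolation of centralizers: in a torsion-free nilpotent group, if `a ^ n`
commutes with `b` for some `n ≠ 0`, then `a` commutes with `b`. -/
private lemma aux_centralizer_isolated {G : Type*} [Group G] [Group.IsNilpotent G]
    (htf : ∀ g : G, g ≠ 1 → ¬IsOfFinOrder g) {a b : G} {n : ℕ} (hn : n ≠ 0)
    (h : a ^ n * b = b * a ^ n) : a * b = b * a := by
  obtain ⟨K, hK⟩ := Group.IsNilpotent.nilpotent G
  have key : ∀ j : ℕ, ⁅a, b⁆ ∈ Subgroup.upperCentralSeries G j →
      ⁅a, b⁆ ∈ Subgroup.upperCentralSeries G 0 := by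
    intro j
    induction j with
    | zero => exact fun h => h
    | succ j ih =>
      intro hc
      refine ih ?_
      have hcy : ∀ z : G, ⁅⁅a, b⁆, z⁆ ∈ Subgroup.upperCentralSeries G j := by
        intro z
        rw [mem_upperCentralSeries_succ_iff] at hc
        exact hc z
      have habn : ⁅a ^ n, b⁆ ∈ Subgroup.upperCentralSeries G j := by
        have : ⁅a ^ n, b⁆ = 1 := commutatorElement_eq_one_iff_commute.2 h
        rw [this]; exact Subgroup.one_mem _
      have hpow : ⁅a, b⁆ ^ n ∈ Subgroup.upperCentralSeries G j :=
        aux_comm_pow_mem hcy habn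
      exact aux_isol htf (j + 1) j hn hc hpow
  have : ⁅a, b⁆ ∈ Subgroup.upperCentralSeries G 0 := key K (by rw [hK]; trivial)
  rw [upperCentralSeries_zero, Subgroup.mem_bot] at this
  exact commutatorElement_eq_one_iff_commute.1 this

/-- Let `G` be a torsion-free nilpotent group containing an abelian subgroup of
finite index. Then `G` is abelian. -/
theorem torsionFree_nilpotent_abelian_of_finiteIndex_abelian_subgroup
    {G : Type*} [Group G] [Group.IsNilpotent G]
    (htf : ∀ g : G, g ≠ 1 → ¬IsOfFinOrder g)
    (H : Subgroup G) (hH : IsMulCommutative H) (hfi : H.FiniteIndex) :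
    ∀ a b : G, a * b = b * a := by
  haveI := hfi
  haveI := hH
  intro a b
  set K := H.normalCore with hKdef
  haveI : K.FiniteIndex := Subgroup.finiteIndex_normalCore H
  set m := K.index with hm
  have hmne : m ≠ 0 := Subgroup.FiniteIndex.index_ne_zero
  have ha : a ^ m ∈ K := K.pow_index_mem a
  have hb : b ^ m ∈ K := K.pow_index_mem b
  have hcomm : a ^ m * b ^ m = b ^ m * a ^ m :=
    Subgroup.mul_comm_of_mem_isMulCommutative H (H.normalCore_le ha) (H.normalCore_le hb)
  have h1 : b * a ^ m = a ^ m * b :=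
    aux_centralizer_isolated htf hmne hcomm.symm
  exact aux_centralizer_isolated htf hmne h1.symm
end

section
/- In a torsion-free nilpotent group, if x^n commutes with y for some positive integer n, then x commutes with y (centralizers are isolated). -/
/-- A monoid is torsion-free if no element besides `1` has finite order
(the definition `Monoid.IsTorsionFree` of the older Mathlib, since removed). -/
def Monoid.IsTorsionFree (G : Type*) [Monoid G] : Prop :=
  ∀ g : G, g ≠ 1 → ¬IsOfFinOrder g

lemma aux_central_comm_pow {K : Type*} [Group K] (a y : K)
    (h : a * y * a⁻¹ * y⁻¹ ∈ Subgroup.center K) (n : ℕ) :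
    a ^ n * y * (a ^ n)⁻¹ = (a * y * a⁻¹ * y⁻¹) ^ n * y := by
  set c := a * y * a⁻¹ * y⁻¹ with hc_def
  have hc : ∀ z : K, Commute c z := fun z => ((Subgroup.mem_center_iff.mp h) z).symm
  induction n with
  | zero => simp
  | succ k ih =>
    have h1 : a ^ (k + 1) * y * (a ^ (k + 1))⁻¹ = a * (a ^ k * y * (a ^ k)⁻¹) * a⁻¹ := by
      rw [pow_succ']; group
    rw [h1, ih]
    have h2 : a * (c ^ k * y) * a⁻¹ = c ^ k * (a * y * a⁻¹) := by
      rw [← mul_assoc, ← mul_assoc, ((hc a).pow_left k).symm.eq]; group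
    have h3 : a * y * a⁻¹ = c * y := by rw [hc_def]; group
    rw [h2, h3, ← mul_assoc, ← pow_succ]

lemma aux_comm_pow_mem_s2 {G : Type*} [Group G] (i : ℕ) (x y : G) (n : ℕ)
    (hx : x * y * x⁻¹ * y⁻¹ ∈ Subgroup.upperCentralSeries G (i + 1))
    (hxn : x ^ n * y * (x ^ n)⁻¹ * y⁻¹ ∈ Subgroup.upperCentralSeries G i) :
    (x * y * x⁻¹ * y⁻¹) ^ n ∈ Subgroup.upperCentralSeries G i := by
  set N := Subgroup.upperCentralSeries G i with hN
  let π : G →* G ⧸ N := QuotientGroup.mk' N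
  have hker : ∀ g : G, π g = 1 ↔ g ∈ N := fun g => QuotientGroup.eq_one_iff g
  have hcπ : π (x * y * x⁻¹ * y⁻¹) = π x * π y * (π x)⁻¹ * (π y)⁻¹ := by
    simp [map_mul, map_inv]
  have hcen : π x * π y * (π x)⁻¹ * (π y)⁻¹ ∈ Subgroup.center (G ⧸ N) := by
    rw [Subgroup.mem_center_iff]
    intro q
    induction q using QuotientGroup.induction_on with
    | H z =>
      have hz : (x * y * x⁻¹ * y⁻¹) * z * (x * y * x⁻¹ * y⁻¹)⁻¹ * z⁻¹ ∈ N :=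
        (Subgroup.mem_upperCentralSeries_succ_iff.mp hx) z
      set c := π x * π y * (π x)⁻¹ * (π y)⁻¹ with hc
      have h' : c * π z * c⁻¹ * (π z)⁻¹ = 1 := by
        have := (hker _).mpr hz
        simp only [map_mul, map_inv] at this
        rw [hc]
        rw [← this]
      rw [mul_inv_eq_one] at h'
      exact (mul_inv_eq_iff_eq_mul.mp h').symm
  have key := aux_central_comm_pow (π x) (π y) hcen n
  have hπn : π x ^ n * π y * (π x ^ n)⁻¹ = π y := by
    have h1 : π (x ^ n) * π y * (π (x ^ n))⁻¹ * (π y)⁻¹ = 1 := by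
      have := (hker _).mpr hxn
      simpa only [map_mul, map_inv] using this
    rw [mul_inv_eq_one] at h1
    rw [← map_pow]
    exact h1
  rw [hπn] at key
  have hpow1 : (π x * π y * (π x)⁻¹ * (π y)⁻¹) ^ n = 1 :=
    (right_eq_mul.mp key)
  rw [← hcπ, ← map_pow] at hpow1
  exact (hker _).mp hpow1

lemma aux_upperCentral_isolated {G : Type*} [Group G] (htf : Monoid.IsTorsionFree G) :
    ∀ (i : ℕ) (g : G) (n : ℕ), 0 < n → g ^ n ∈ Subgroup.upperCentralSeries G i →
      g ∈ Subgroup.upperCentralSeries G (i + 1) → g ∈ Subgroup.upperCentralSeries G i := by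
  intro i
  induction i with
  | zero =>
    intro g n hn hgn _
    rw [upperCentralSeries_zero, Subgroup.mem_bot] at hgn ⊢
    by_contra hg
    exact htf g hg (isOfFinOrder_iff_pow_eq_one.mpr ⟨n, hn, hgn⟩)
  | succ i ih =>
    intro g n hn hgn hg1
    rw [Subgroup.mem_upperCentralSeries_succ_iff]
    intro y
    have hx : g * y * g⁻¹ * y⁻¹ ∈ Subgroup.upperCentralSeries G (i + 1) :=
      (Subgroup.mem_upperCentralSeries_succ_iff.mp hg1) y
    have hxn : g ^ n * y * (g ^ n)⁻¹ * y⁻¹ ∈ Subgroup.upperCentralSeries G i :=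
      (Subgroup.mem_upperCentralSeries_succ_iff.mp hgn) y
    have hpow := aux_comm_pow_mem_s2 i g y n hx hxn
    exact ih (g * y * g⁻¹ * y⁻¹) n hn hpow hx

/-- In a torsion-free nilpotent group, if `x ^ n` commutes with `y` for some
positive integer `n`, then `x` commutes with `y` (centralizers are isolated). -/
theorem torsionFree_nilpotent_isolated_centralizer
    {G : Type*} [Group G] [Group.IsNilpotent G]
    (htf : Monoid.IsTorsionFree G)
    (x y : G) (n : ℕ) (hn : 0 < n) (h : x ^ n * y = y * x ^ n) :
    x * y = y * x := by
  obtain ⟨k, hk⟩ := Group.IsNilpotent.nilpotent' (G := G)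
  have hxn1 : x ^ n * y * (x ^ n)⁻¹ * y⁻¹ = 1 := by
    rw [h]; group
  have descend : ∀ i : ℕ, x * y * x⁻¹ * y⁻¹ ∈ Subgroup.upperCentralSeries G i →
      x * y * x⁻¹ * y⁻¹ ∈ Subgroup.upperCentralSeries G 0 := by
    intro i
    induction i with
    | zero => exact fun hm => hm
    | succ i ih =>
      intro hm
      have hxn : x ^ n * y * (x ^ n)⁻¹ * y⁻¹ ∈ Subgroup.upperCentralSeries G i := by
        rw [hxn1]; exact one_mem _
      have hpow := aux_comm_pow_mem_s2 i x y n hm hxn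
      exact ih (aux_upperCentral_isolated htf i (x * y * x⁻¹ * y⁻¹) n hn hpow hm)
  have : x * y * x⁻¹ * y⁻¹ ∈ Subgroup.upperCentralSeries G 0 := by
    apply descend k
    rw [hk]
    trivial
  rw [upperCentralSeries_zero, Subgroup.mem_bot] at this
  have := mul_inv_eq_one.mp this
  exact mul_inv_eq_iff_eq_mul.mp this
end

section
/- Let φ : ℤ^m → U(l) be a group homomorphism with finite image. Then there exists a continuous group homomorphism Φ : ℝ^m → U(l) whose restriction to ℤ^m ⊂ ℝ^m equals φ. -/
open Polynomial NormedSpace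

section aux
open scoped Matrix.Norms.L2Operator

noncomputable local instance matCStar (l : ℕ) : CStarAlgebra (Matrix (Fin l) (Fin l) ℂ) := by
  exact Matrix.instCStarAlgebra

noncomputable local instance matQ (l : ℕ) : NormedAlgebra ℚ (Matrix (Fin l) (Fin l) ℂ) :=
  NormedAlgebra.restrictScalars ℚ ℂ _

/-- For a unitary matrix `u` of finite order, there is a skew-adjoint logarithm `L`
which commutes with everything commuting with `u`. -/
theorem exists_skew_log {l : ℕ} (u : Matrix (Fin l) (Fin l) ℂ)
    (hu : u ∈ Matrix.unitaryGroup (Fin l) ℂ) {N : ℕ} (hN : 0 < N) (huN : u ^ N = 1) :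
    ∃ L : Matrix (Fin l) (Fin l) ℂ, star L = -L ∧ exp L = u ∧
      ∀ b : Matrix (Fin l) (Fin l) ℂ, Commute u b → Commute L b := by
  have hmem := Unitary.mem_iff.mp hu
  have hnormal : IsStarNormal u := ⟨by rw [Commute, SemiconjBy, hmem.1, hmem.2]⟩
  -- spectrum facts
  have hspec : ∀ z ∈ spectrum ℂ u, z ^ N = 1 := by
    intro z hz
    have h1 : z ^ N ∈ spectrum ℂ ((aeval u) (X ^ N : ℂ[X])) :=
      spectrum.subset_polynomial_aeval u (X ^ N : ℂ[X]) ⟨z, hz, by simp⟩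
    rw [map_pow, aeval_X, huN] at h1
    by_contra h
    have : IsUnit (algebraMap ℂ (Matrix (Fin l) (Fin l) ℂ) (z ^ N) - 1) := by
      rw [← map_one (algebraMap ℂ (Matrix (Fin l) (Fin l) ℂ)), ← map_sub]
      exact (isUnit_iff_ne_zero.mpr (sub_ne_zero.mpr h)).map _
    exact (spectrum.mem_iff.mp h1) this
  have hspec_ne : ∀ z ∈ spectrum ℂ u, z ≠ 0 := by
    intro z hz h0
    have := hspec z hz
    rw [h0, zero_pow hN.ne'] at this
    exact zero_ne_one this
  have hspec_abs : ∀ z ∈ spectrum ℂ u, ‖z‖ = 1 := by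
    intro z hz
    have h := hspec z hz
    have : ‖z‖ ^ N = 1 := by
      rw [← norm_pow, h, norm_one]
    rcases (pow_eq_one_iff_cases).mp this with h'|h'|h' <;>
      first | omega | assumption | nlinarith [norm_nonneg z]
  -- the finite set of N-th roots of unity
  set S : Finset ℂ := (Polynomial.nthRoots N (1 : ℂ)).toFinset with hS
  have hmemS : ∀ z ∈ spectrum ℂ u, z ∈ S := by
    intro z hz
    rw [hS, Multiset.mem_toFinset, Polynomial.mem_nthRoots hN]
    exact hspec z hz
  -- Lagrange interpolation of the complex logarithm on S
  set q : ℂ[X] := Lagrange.interpolate S id Complex.log with hq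
  have heval : ∀ z ∈ spectrum ℂ u, q.eval z = Complex.log z := fun z hz => by
    rw [hq]; simpa using Lagrange.eval_interpolate_at_node (v := id) (s := S)
      Complex.log (Set.injOn_id _) (hmemS z hz)
  refine ⟨(aeval u) q, ?_, ?_, ?_⟩
  · rw [← cfc_polynomial q u, ← cfc_star]
    rw [show -cfc (fun a => eval a q) u = cfc (fun a => -eval a q) u from (cfc_neg _ u).symm]
    apply cfc_congr
    intro z hz
    have h1 := heval z hz
    have hre : (Complex.log z).re = 0 := by
      rw [Complex.log_re, hspec_abs z hz, Real.log_one]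
    simp only [h1]
    apply Complex.ext
    · simp [hre]
    · simp
  · have hL : IsStarNormal ((aeval u) q) := by
      rw [← cfc_polynomial q u]; exact cfc_predicate _ u
    conv_rhs => rw [← cfc_id ℂ u hnormal]
    rw [← cfc_polynomial q u, ← CFC.complex_exp_eq_normedSpace_exp (cfc_predicate _ u),
      ← cfc_comp Complex.exp (fun a => eval a q) u hnormal
        (Complex.continuous_exp.continuousOn) (q.continuous_aeval.continuousOn)]
    apply cfc_congr
    intro z hz
    simp only [Function.comp_apply, heval z hz, id_eq]
    exact Complex.exp_log (hspec_ne z hz)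
  · intro b hb
    induction q using Polynomial.induction_on with
    | C c =>
      simp only [aeval_C]
      exact Algebra.commutes c b
    | add p q hp hq => simpa [map_add] using hp.add_left hq
    | monomial n c hc =>
      simp only [map_mul, map_pow, aeval_X, aeval_C]
      exact Commute.mul_left (Algebra.commutes c b) (hb.pow_left (n+1))

/-- From commuting skew-adjoint matrices, build a continuous one-parameter family of
unitaries. -/
theorem aux_main {l m : ℕ} (L : Fin m → Matrix (Fin l) (Fin l) ℂ)
    (h1 : ∀ i, star (L i) = -(L i)) (hLL : ∀ i j, Commute (L i) (L j)) :
    ∃ M : (Fin m → ℝ) → Matrix (Fin l) (Fin l) ℂ,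
      Continuous M ∧ (∀ x y, M (x + y) = M x * M y) ∧
      (∀ x, M x ∈ Matrix.unitaryGroup (Fin l) ℂ) ∧
      (∀ i, M (Pi.single i 1) = exp (L i)) := by
  classical
  set S : (Fin m → ℝ) → Matrix (Fin l) (Fin l) ℂ :=
    fun x => ∑ i, (x i : ℂ) • L i with hSdef
  have hSstar : ∀ x, star (S x) = - S x := by
    intro x
    simp [hSdef, star_sum, star_smul, Complex.conj_ofReal, h1, smul_neg,
      Finset.sum_neg_distrib]
  have hScomm : ∀ x y, Commute (S x) (S y) := by
    intro x y
    apply Commute.sum_left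
    intro i _
    apply Commute.sum_right
    intro j _
    exact ((hLL i j).smul_left _).smul_right _
  have hSadd : ∀ x y, S (x + y) = S x + S y := by
    intro x y
    simp [hSdef, Pi.add_apply, Complex.ofReal_add, add_smul, Finset.sum_add_distrib]
  refine ⟨fun x => exp (S x), ?_, ?_, ?_, ?_⟩
  · exact exp_continuous.comp (continuous_finset_sum _ fun i _ =>
      (Complex.continuous_ofReal.comp (continuous_apply i)).smul continuous_const)
  · intro x y
    show exp (S (x + y)) = exp (S x) * exp (S y)
    rw [hSadd]
    exact exp_add_of_commute (hScomm x y)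
  · intro x
    have hstar : star (exp (S x)) = exp (- S x) := by rw [star_exp, hSstar]
    refine Unitary.mem_iff.mpr ⟨?_, ?_⟩
    · rw [hstar, ← exp_add_of_commute ((Commute.refl (S x)).neg_left),
        neg_add_cancel, exp_zero]
    · rw [hstar, ← exp_add_of_commute ((Commute.refl (S x)).neg_right),
        add_neg_cancel, exp_zero]
  · intro i
    have hsum : (∑ j, (((Pi.single (M := fun _ : Fin m => ℝ) i 1 j : ℝ) : ℂ)) • L j) = L i := by
      rw [Finset.sum_eq_single_of_mem i (Finset.mem_univ i)]
      · simp
      · intro j _ hj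
        simp [Pi.single_eq_of_ne hj]
    show exp (S (Pi.single i 1)) = exp (L i)
    exact congrArg exp hsum

end aux

/-- Two multiplicative maps on `ℤ^m` with values in a group that agree on the standard
basis vectors agree everywhere. -/
theorem pi_int_hom_ext {m : ℕ} {G : Type*} [Group G] (f g : (Fin m → ℤ) → G)
    (hf : ∀ x y, f (x + y) = f x * f y) (hg : ∀ x y, g (x + y) = g x * g y)
    (h : ∀ i, f (Pi.single i 1) = g (Pi.single i 1)) (v : Fin m → ℤ) : f v = g v := by
  classical
  have hone : ∀ (F : (Fin m → ℤ) → G), (∀ x y, F (x + y) = F x * F y) → F 0 = 1 := by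
    intro F hF
    have h0 := hF 0 0
    rw [add_zero] at h0
    exact mul_left_cancel (a := F 0) (by rw [← h0, mul_one])
  have hsingle : ∀ i (n : ℤ), f (Pi.single i n) = g (Pi.single i n) := by
    intro i n
    let F : ℤ →+ Additive G := AddMonoidHom.mk'
      (fun k => Additive.ofMul (f (Pi.single i k)))
      (fun a b => by
        show f (Pi.single i (a + b)) = f (Pi.single i a) * f (Pi.single i b)
        rw [Pi.single_add, hf])
    let G' : ℤ →+ Additive G := AddMonoidHom.mk'
      (fun k => Additive.ofMul (g (Pi.single i k)))
      (fun a b => by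
        show g (Pi.single i (a + b)) = g (Pi.single i a) * g (Pi.single i b)
        rw [Pi.single_add, hg])
    have hFG : F = G' := AddMonoidHom.ext_int (by simpa [F, G'] using h i)
    simpa [F, G'] using DFunLike.congr_fun hFG n
  have key : ∀ (s : Finset (Fin m)) (w : Fin m → ℤ), (∀ i, i ∉ s → w i = 0) →
      f w = g w := by
    intro s
    induction s using Finset.induction_on with
    | empty =>
      intro w hw
      have : w = 0 := funext fun i => hw i (Finset.notMem_empty i)
      rw [this, hone f hf, hone g hg]
    | @insert a s hns ih =>
      intro w hw
      have hdecomp : w = Pi.single a (w a) + Function.update w a 0 := by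
        funext j
        by_cases hj : j = a
        · subst hj; simp
        · simp [Pi.single_apply, hj, Function.update_apply]
      have hsupp : ∀ i, i ∉ s → Function.update w a 0 i = 0 := by
        intro i hi
        by_cases hia : i = a
        · subst hia; simp
        · rw [Function.update_apply, if_neg hia]
          exact hw i (by simp [hia, hi])
      rw [hdecomp, hf, hg, hsingle a (w a), ih _ hsupp]
  exact key Finset.univ v fun i hi => absurd (Finset.mem_univ i) hi

/-- Let `φ : ℤ^m → U(l)` be a group homomorphism with finite image. Then there
exists a continuous group homomorphism `Φ : ℝ^m → U(l)` whose restriction to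
`ℤ^m ⊂ ℝ^m` equals `φ`. -/
theorem exists_continuous_real_extension_of_finite_image_unitary_rep
    {m l : ℕ} (φ : (Fin m → ℤ) → Matrix.unitaryGroup (Fin l) ℂ)
    (hφ : ∀ x y : Fin m → ℤ, φ (x + y) = φ x * φ y)
    (hfin : (Set.range φ).Finite) :
    ∃ Φ : (Fin m → ℝ) → Matrix.unitaryGroup (Fin l) ℂ,
      Continuous Φ ∧ (∀ x y : Fin m → ℝ, Φ (x + y) = Φ x * Φ y) ∧
      ∀ v : Fin m → ℤ, Φ (fun i => (v i : ℝ)) = φ v := by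
  classical
  have φ0 : φ 0 = 1 := by
    have h := hφ 0 0
    rw [add_zero] at h
    exact mul_left_cancel (a := φ 0) (by rw [← h, mul_one])
  set u : Fin m → Matrix.unitaryGroup (Fin l) ℂ := fun i => φ (Pi.single i 1) with hu
  have hpow : ∀ i (n : ℕ), φ (Pi.single i (n : ℤ)) = u i ^ n := by
    intro i n
    induction n with
    | zero => simpa using φ0
    | succ n ih =>
      have hsing : Pi.single i ((n : ℤ) + 1) = Pi.single (M := fun _ : Fin m => ℤ) i (n : ℤ) + Pi.single i 1 := by
        rw [← Pi.single_add]
      rw [Nat.cast_succ, hsing, hφ, ih, pow_succ]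
  have horder : ∀ i, ∃ N : ℕ, 0 < N ∧ ((u i : Matrix (Fin l) (Fin l) ℂ)) ^ N = 1 := by
    intro i
    have hfin' : Finite (Set.range φ) := hfin
    obtain ⟨a, b, hab, h⟩ := Finite.exists_ne_map_eq_of_infinite
      (fun n : ℕ => (⟨φ (Pi.single i (n : ℤ)), Set.mem_range_self _⟩ : Set.range φ))
    have key2 : ∀ a b : ℕ, a < b → φ (Pi.single i (a : ℤ)) = φ (Pi.single i (b : ℤ)) →
        ∃ N : ℕ, 0 < N ∧ ((u i : Matrix (Fin l) (Fin l) ℂ)) ^ N = 1 := by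
      intro a b hlt heq
      refine ⟨b - a, by omega, ?_⟩
      have h1 : u i ^ a * u i ^ (b - a) = u i ^ a * 1 := by
        rw [mul_one, ← pow_add, Nat.add_sub_cancel' hlt.le, ← hpow, ← hpow, heq]
      have h2 : u i ^ (b - a) = 1 := mul_left_cancel h1
      have h3 := congrArg (Subtype.val) h2
      simpa [SubmonoidClass.coe_pow] using h3
    rcases hab.lt_or_gt with hlt | hlt
    · exact key2 _ _ hlt (congrArg Subtype.val h)
    · exact key2 _ _ hlt (congrArg Subtype.val h.symm)
  have hcommu : ∀ i j, Commute ((u i : Matrix (Fin l) (Fin l) ℂ)) ((u j : Matrix (Fin l) (Fin l) ℂ)) := by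
    intro i j
    have hcc : φ (Pi.single i 1 + Pi.single j 1) = φ (Pi.single j 1 + Pi.single i 1) := by
      rw [add_comm]
    rw [hφ, hφ] at hcc
    have := congrArg Subtype.val hcc
    simpa [Commute, SemiconjBy] using this
  have hlog : ∀ i, ∃ L : Matrix (Fin l) (Fin l) ℂ, star L = -L ∧
      NormedSpace.exp L = (u i : Matrix (Fin l) (Fin l) ℂ) ∧
      ∀ b, Commute ((u i : Matrix (Fin l) (Fin l) ℂ)) b → Commute L b := by
    intro i
    obtain ⟨N, hN, hNe⟩ := horder i
    exact exists_skew_log _ (u i).2 hN hNe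
  choose L hL1 hL2 hL3 using hlog
  have hLL : ∀ i j, Commute (L i) (L j) := fun i j =>
    ((hL3 j _ ((hL3 i _ (hcommu i j)).symm)).symm)
  obtain ⟨M, hMcont, hMadd, hMmem, hMsingle⟩ := aux_main L hL1 hLL
  set Φ : (Fin m → ℝ) → Matrix.unitaryGroup (Fin l) ℂ := fun x => ⟨M x, hMmem x⟩ with hΦ
  have hΦadd : ∀ x y, Φ (x + y) = Φ x * Φ y := by
    intro x y
    exact Subtype.ext (hMadd x y)
  refine ⟨Φ, ?_, hΦadd, ?_⟩
  · exact hMcont.subtype_mk _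
  · intro v
    refine (pi_int_hom_ext (fun v => Φ fun i => (v i : ℝ)) φ ?_ hφ ?_ v)
    · intro x y
      show Φ (fun i => (((x + y) i : ℤ) : ℝ)) = Φ (fun i => (x i : ℝ)) * Φ (fun i => (y i : ℝ))
      have hcast : (fun i => (((x + y) i : ℤ) : ℝ)) = (fun i : Fin m => (x i : ℝ)) + (fun i : Fin m => (y i : ℝ)) := by
        funext i
        simp
      rw [hcast, hΦadd]
    · intro i
      show Φ (fun j => ((Pi.single (M := fun _ : Fin m => ℤ) i 1 j : ℤ) : ℝ)) = φ (Pi.single i 1)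
      have hcast : (fun j => ((Pi.single (M := fun _ : Fin m => ℤ) i 1 j : ℤ) : ℝ)) = Pi.single i (1 : ℝ) := by
        funext j
        simp [Pi.single_apply, apply_ite (fun z : ℤ => (z : ℝ))]
      rw [hcast]
      refine Subtype.ext ?_
      rw [show ((Φ (Pi.single i 1) : Matrix (Fin l) (Fin l) ℂ)) = M (Pi.single i 1) from rfl,
        hMsingle i, hL2 i]
end
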